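/- Let ν, ξ, η_b, ν_b : ℝ → ℝ be three times differentiable and h, g : ℝ → ℝ three times differentiable, and suppose ν(y - h(x)) + ξ(x) = ν_b(x - g(y)) + η_b(y) for all (x, y) in ℝ². Then at every point (x, y) with ν''(y - h(x))·h'(x) ≠ 0 and g'(y) ≠ 0, the following differential equation holds: ξ'''(x) = ξ''(x)·(h''/h' - ν'''·h'/ν'') + ν'''·ν'·h''·h'/ν'' - ν'·(h'')²/h' - 2ν''·h''·h' + ν'·h''', where ν and its derivatives are evaluated at y - h(x) and h and its derivatives at x. -/

import Mathlib

private lemma diff3 (f : ℝ → ℝ) (hf : ContDiff ℝ 3 f) :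
    Differentiable ℝ f ∧ Differentiable ℝ (deriv f) ∧ Differentiable ℝ (deriv (deriv f)) := by
  have h0 : ContDiff ℝ ((2:ℕ) + 1) f := by exact_mod_cast hf
  have h1 : ContDiff ℝ 2 (deriv f) := (contDiff_succ_iff_deriv.mp h0).2.2
  have h1' : ContDiff ℝ ((1:ℕ) + 1) (deriv f) := by exact_mod_cast h1
  have h2 : ContDiff ℝ 1 (deriv (deriv f)) := (contDiff_succ_iff_deriv.mp h1').2.2
  exact ⟨hf.differentiable (by norm_num), h1.differentiable (by norm_num),
    h2.differentiable (by norm_num)⟩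

private lemma hdL (f : ℝ → ℝ) (hf : Differentiable ℝ f) (c : ℝ) {u : ℝ → ℝ} {u' x : ℝ}
    (hu : HasDerivAt u u' x) :
    HasDerivAt (fun t => f (c - u t)) (-(deriv f (c - u x) * u')) x := by
  have := (hf (c - u x)).hasDerivAt.comp x ((hasDerivAt_const x c).sub hu)
  simpa [mul_comm, Function.comp_def] using this

private lemma hdR (f : ℝ → ℝ) (hf : Differentiable ℝ f) (c : ℝ) {u : ℝ → ℝ} {u' x : ℝ}
    (hu : HasDerivAt u u' x) :
    HasDerivAt (fun t => f (u t - c)) (deriv f (u x - c) * u') x := by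
  have := (hf (u x - c)).hasDerivAt.comp x (hu.sub_const c)
  simpa [mul_comm, Function.comp_def] using this

theorem anm_identifiability_ode
    (ν ξ η_b ν_b h g : ℝ → ℝ)
    (hν : ContDiff ℝ 3 ν) (hξ : ContDiff ℝ 3 ξ)
    (hη : ContDiff ℝ 3 η_b) (hνb : ContDiff ℝ 3 ν_b)
    (hh : ContDiff ℝ 3 h) (hg : ContDiff ℝ 3 g)
    (heq : ∀ x y : ℝ, ν (y - h x) + ξ x = ν_b (x - g y) + η_b y) :
    ∀ x y : ℝ,
      deriv (deriv ν) (y - h x) * deriv h x ≠ 0 →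
      deriv g y ≠ 0 →
      deriv (deriv (deriv ξ)) x =
        deriv (deriv ξ) x *
            (deriv (deriv h) x / deriv h x -
              deriv (deriv (deriv ν)) (y - h x) * deriv h x /
                deriv (deriv ν) (y - h x)) +
          deriv (deriv (deriv ν)) (y - h x) * deriv ν (y - h x) *
              deriv (deriv h) x * deriv h x / deriv (deriv ν) (y - h x) -
          deriv ν (y - h x) * (deriv (deriv h) x) ^ 2 / deriv h x -
          2 * deriv (deriv ν) (y - h x) * deriv (deriv h) x * deriv h x +
          deriv ν (y - h x) * deriv (deriv (deriv h)) x := by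
  obtain ⟨hν0, hν1, hν2⟩ := diff3 ν hν
  obtain ⟨hξ0, hξ1, hξ2⟩ := diff3 ξ hξ
  obtain ⟨hη0, _, _⟩ := diff3 η_b hη
  obtain ⟨hνb0, hνb1, _⟩ := diff3 ν_b hνb
  obtain ⟨hh0, hh1, hh2⟩ := diff3 h hh
  obtain ⟨hg0, _, _⟩ := diff3 g hg
  -- first derivative in x
  have E1 : ∀ x y : ℝ, -(deriv ν (y - h x) * deriv h x) + deriv ξ x = deriv ν_b (x - g y) := by
    intro x y
    have hL : HasDerivAt (fun t => ν (y - h t) + ξ t)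
        (-(deriv ν (y - h x) * deriv h x) + deriv ξ x) x :=
      (hdL ν hν0 y (hh0 x).hasDerivAt).add (hξ0 x).hasDerivAt
    have hR : HasDerivAt (fun t => ν_b (t - g y) + η_b y)
        (deriv ν_b (x - g y) * 1 + 0) x :=
      (hdR ν_b hνb0 (g y) (hasDerivAt_id x)).add (hasDerivAt_const x _)
    have hR' : HasDerivAt (fun t => ν (y - h t) + ξ t) (deriv ν_b (x - g y) * 1 + 0) x :=
      hR.congr_of_eventuallyEq (Filter.Eventually.of_forall fun t => heq t y)
    have := hL.unique hR'
    simpa using this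
  -- second derivative in x
  have E2 : ∀ x y : ℝ,
      -((-(deriv (deriv ν) (y - h x) * deriv h x)) * deriv h x
          + deriv ν (y - h x) * deriv (deriv h) x) + deriv (deriv ξ) x
        = deriv (deriv ν_b) (x - g y) * 1 := by
    intro x y
    have hL : HasDerivAt (fun t => -(deriv ν (y - h t) * deriv h t) + deriv ξ t)
        (-((-(deriv (deriv ν) (y - h x) * deriv h x)) * deriv h x
          + deriv ν (y - h x) * deriv (deriv h) x) + deriv (deriv ξ) x) x :=
      (((hdL (deriv ν) hν1 y (hh0 x).hasDerivAt).mul (hh1 x).hasDerivAt).neg).add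
        (hξ1 x).hasDerivAt
    have hR : HasDerivAt (fun t => deriv ν_b (t - g y))
        (deriv (deriv ν_b) (x - g y) * 1) x :=
      hdR (deriv ν_b) hνb1 (g y) (hasDerivAt_id x)
    have hL' : HasDerivAt (fun t => deriv ν_b (t - g y))
        (-((-(deriv (deriv ν) (y - h x) * deriv h x)) * deriv h x
          + deriv ν (y - h x) * deriv (deriv h) x) + deriv (deriv ξ) x) x :=
      hL.congr_of_eventuallyEq (Filter.Eventually.of_forall fun t => (E1 t y).symm)
    exact hL'.unique hR
  -- derivative in y
  have E3 : ∀ x y : ℝ,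
      deriv ν (y - h x) * 1 + 0 = -(deriv ν_b (x - g y) * deriv g y) + deriv η_b y := by
    intro x y
    have hL : HasDerivAt (fun s => ν (s - h x) + ξ x) (deriv ν (y - h x) * 1 + 0) y :=
      (hdR ν hν0 (h x) (hasDerivAt_id y)).add (hasDerivAt_const y _)
    have hR : HasDerivAt (fun s => ν_b (x - g s) + η_b s)
        (-(deriv ν_b (x - g y) * deriv g y) + deriv η_b y) y :=
      (hdL ν_b hνb0 x (hg0 y).hasDerivAt).add (hη0 y).hasDerivAt
    have hL' : HasDerivAt (fun s => ν_b (x - g s) + η_b s) (deriv ν (y - h x) * 1 + 0) y :=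
      hL.congr_of_eventuallyEq (Filter.Eventually.of_forall fun s => (heq x s).symm)
    exact hL'.unique hR
  -- mixed derivative: differentiate E3 in x
  have E4 : ∀ x y : ℝ,
      -(deriv (deriv ν) (y - h x) * deriv h x)
        = -(deriv (deriv ν_b) (x - g y) * 1 * deriv g y) + 0 := by
    intro x y
    have hL : HasDerivAt (fun t => deriv ν (y - h t) * 1 + 0)
        (-(deriv (deriv ν) (y - h x) * deriv h x)) x := by
      have := hdL (deriv ν) hν1 y (hh0 x).hasDerivAt
      simpa using ((this.mul_const 1).add_const 0)
    have hR : HasDerivAt (fun t => -(deriv ν_b (t - g y) * deriv g y) + deriv η_b y)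
        (-(deriv (deriv ν_b) (x - g y) * 1 * deriv g y) + 0) x :=
      (((hdR (deriv ν_b) hνb1 (g y) (hasDerivAt_id x)).mul_const (deriv g y)).neg).add
        (hasDerivAt_const x _)
    have hL' : HasDerivAt (fun t => -(deriv ν_b (t - g y) * deriv g y) + deriv η_b y)
        (-(deriv (deriv ν) (y - h x) * deriv h x)) x :=
      hL.congr_of_eventuallyEq (Filter.Eventually.of_forall fun t => (E3 t y).symm)
    exact hL'.unique hR
  -- F = G * g'(y)
  have E5 : ∀ x y : ℝ,
      deriv (deriv ν) (y - h x) * deriv h x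
        = (deriv (deriv ν) (y - h x) * deriv h x * deriv h x
            - deriv ν (y - h x) * deriv (deriv h) x + deriv (deriv ξ) x) * deriv g y := by
    intro x y
    have e2 := E2 x y
    have e4 := E4 x y
    linear_combination -e4 - deriv g y * e2
  intro x y hF hgy
  -- differentiate E5 in x at the point x, y fixed
  have E6 :
      (-(deriv (deriv (deriv ν)) (y - h x) * deriv h x)) * deriv h x
          + deriv (deriv ν) (y - h x) * deriv (deriv h) x
        = (((-(deriv (deriv (deriv ν)) (y - h x) * deriv h x)) * deriv h x
              + deriv (deriv ν) (y - h x) * deriv (deriv h) x) * deriv h x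
            + deriv (deriv ν) (y - h x) * deriv h x * deriv (deriv h) x
            - ((-(deriv (deriv ν) (y - h x) * deriv h x)) * deriv (deriv h) x
              + deriv ν (y - h x) * deriv (deriv (deriv h)) x)
            + deriv (deriv (deriv ξ)) x) * deriv g y := by
    have hL : HasDerivAt (fun t => deriv (deriv ν) (y - h t) * deriv h t)
        ((-(deriv (deriv (deriv ν)) (y - h x) * deriv h x)) * deriv h x
          + deriv (deriv ν) (y - h x) * deriv (deriv h) x) x :=
      (hdL (deriv (deriv ν)) hν2 y (hh0 x).hasDerivAt).mul (hh1 x).hasDerivAt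
    have hR : HasDerivAt
        (fun t => (deriv (deriv ν) (y - h t) * deriv h t * deriv h t
            - deriv ν (y - h t) * deriv (deriv h) t + deriv (deriv ξ) t) * deriv g y)
        ((((-(deriv (deriv (deriv ν)) (y - h x) * deriv h x)) * deriv h x
              + deriv (deriv ν) (y - h x) * deriv (deriv h) x) * deriv h x
            + deriv (deriv ν) (y - h x) * deriv h x * deriv (deriv h) x
            - ((-(deriv (deriv ν) (y - h x) * deriv h x)) * deriv (deriv h) x
              + deriv ν (y - h x) * deriv (deriv (deriv h)) x)
            + deriv (deriv (deriv ξ)) x) * deriv g y) x :=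
      (((((hdL (deriv (deriv ν)) hν2 y (hh0 x).hasDerivAt).mul (hh1 x).hasDerivAt).mul
          (hh1 x).hasDerivAt).sub
        ((hdL (deriv ν) hν1 y (hh0 x).hasDerivAt).mul (hh2 x).hasDerivAt)).add
        (hξ2 x).hasDerivAt).mul_const (deriv g y)
    have hL' : HasDerivAt
        (fun t => (deriv (deriv ν) (y - h t) * deriv h t * deriv h t
            - deriv ν (y - h t) * deriv (deriv h) t + deriv (deriv ξ) t) * deriv g y)
        ((-(deriv (deriv (deriv ν)) (y - h x) * deriv h x)) * deriv h x
          + deriv (deriv ν) (y - h x) * deriv (deriv h) x) x :=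
      hL.congr_of_eventuallyEq (Filter.Eventually.of_forall fun t => (E5 t y).symm)
    exact hL'.unique hR
  -- now pure algebra
  have e5 := E5 x y
  set a := deriv ν (y - h x) with ha
  set b := deriv (deriv ν) (y - h x) with hb
  set c := deriv (deriv (deriv ν)) (y - h x) with hc
  set p := deriv h x with hp
  set q := deriv (deriv h) x with hq
  set r := deriv (deriv (deriv h)) x with hr
  set s := deriv (deriv ξ) x with hs
  set t := deriv (deriv (deriv ξ)) x with ht
  have hbne : b ≠ 0 := fun h0 => hF (by rw [h0]; ring)
  have hpne : p ≠ 0 := fun h0 => hF (by rw [h0]; ring)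
  have hGne : b * p * p - a * q + s ≠ 0 := by
    intro h0
    rw [h0, zero_mul] at e5
    exact hF e5
  have key : ((-(c * p)) * p + b * q) * (b * p * p - a * q + s)
      = (((-(c * p)) * p + b * q) * p + b * p * q - ((-(b * p)) * q + a * r) + t) * (b * p) := by
    linear_combination (b * p * p - a * q + s) * E6
      - (((-(c * p)) * p + b * q) * p + b * p * q - ((-(b * p)) * q + a * r) + t) * e5
  field_simp
  linear_combination (-1 : ℝ) * key
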